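/- Let (Ω, 𝓕, P) be a probability space, C ⊆ L^∞ a convex cone with −L^∞₊ ⊆ C, and Φ : (0,∞) → ℝ convex satisfying the growth condition G(Φ) with Φ(0) < +∞. If M_Φ ∩ ℙ ≠ ∅, then {z ∈ Lin(M_Φ) : E_P[z·f] ≤ 0 for all f ∈ C_Φ} = co(M_Φ); that is, the polar of C_Φ inside the linear span of the densities of M_Φ is exactly the convex cone generated by M_Φ, so C_Φ and co(M_Φ) are polar to one another. -/

import Mathlib

open MeasureTheory Filter

variable {Ω : Type*} [MeasurableSpace Ω]

/-- The set `M₁` of separating measures for the convex cone `C ⊆ L^∞` of bounded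
super-replicable claims: probability measures `Q ≪ P` with `E_Q[g] ≤ 0` for all `g ∈ C`. -/
def sepMeasures (P : Measure Ω) (C : Set (Ω → ℝ)) : Set (Measure Ω) :=
  {Q | IsProbabilityMeasure Q ∧ Q ≪ P ∧ ∀ g ∈ C, ∫ ω, g ω ∂Q ≤ 0}

/-- The set `M_Φ` of separating measures with finite generalized entropy
`E_P[Φ(dQ/dP)] < ∞` (here `Φ(0) < +∞`, `Φ 0` being the limit of `Φ` at `0⁺`, so that
finiteness of the generalized entropy is plain integrability of `Φ(dQ/dP)`). -/
def MPhi (P : Measure Ω) (C : Set (Ω → ℝ)) (Φ : ℝ → ℝ) : Set (Measure Ω) :=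
  {Q ∈ sepMeasures P C | Integrable (fun ω => Φ ((Q.rnDeriv P ω).toReal)) P}

/-- `C_Φ`: the random variables lying, for every `Q ∈ M_Φ`, in the `L¹(Q)`-norm closure
of `C`. -/
def CPhi (P : Measure Ω) (C : Set (Ω → ℝ)) (Φ : ℝ → ℝ) : Set (Ω → ℝ) :=
  {f | ∀ Q ∈ MPhi P C Φ, Integrable f Q ∧
    ∀ ε : ℝ, 0 < ε → ∃ g ∈ C, ∫ ω, |f ω - g ω| ∂Q < ε}

/-- The density `dQ/dP` as an element of `L⁰(P)` (an a.e.-equivalence class). -/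
noncomputable def densAE (P Q : Measure Ω) : Ω →ₘ[P] ℝ :=
  MeasureTheory.AEEqFun.mk (fun ω => (Q.rnDeriv P ω).toReal)
    ((Measure.measurable_rnDeriv Q P).ennreal_toReal).aestronglyMeasurable

open scoped ENNReal NNReal

lemma BFaux.convexOn_Ici {Φ : ℝ → ℝ}
    (hΦconv : ConvexOn ℝ (Set.Ioi 0) Φ)
    (hΦ0 : Tendsto Φ (nhdsWithin 0 (Set.Ioi 0)) (nhds (Φ 0))) :
    ConvexOn ℝ (Set.Ici 0) Φ := by
  have key : ∀ y : ℝ, 0 < y → ∀ a b : ℝ, 0 ≤ a → 0 ≤ b → a + b = 1 →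
      Φ (b * y) ≤ a * Φ 0 + b * Φ y := by
    intro y hy a b ha hb hab
    rcases eq_or_lt_of_le ha with ha0 | ha0
    · have hb1 : b = 1 := by linarith
      simp [← ha0, hb1]
    rcases eq_or_lt_of_le hb with hb0 | hb0
    · have ha1 : a = 1 := by linarith
      simp [← hb0, ha1]
    have hby : 0 < b * y := mul_pos hb0 hy
    have hble : b * y ≤ y := by nlinarith
    have hev : ∀ᶠ u in nhdsWithin (0:ℝ) (Set.Ioi 0),
        Φ (b * y) ≤ (a * y / (y - u)) * Φ u + (1 - a * y / (y - u)) * Φ y := by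
      filter_upwards [eventually_mem_nhdsWithin,
        (gt_mem_nhds hby).filter_mono nhdsWithin_le_nhds] with u hu hu'
      have hu0 : (0:ℝ) < u := hu
      have hyu : 0 < y - u := by linarith
      have hyu' : y - u ≠ 0 := hyu.ne'
      set θ := a * y / (y - u) with hθ
      have hθ0 : 0 ≤ θ := by positivity
      have hθ1 : θ ≤ 1 := by
        rw [hθ, div_le_one hyu]; nlinarith
      have hθ1' : (0:ℝ) ≤ 1 - θ := by linarith
      have hsum : θ + (1 - θ) = 1 := by ring
      have hba : b = 1 - a := by linarith
      have harg : θ * u + (1 - θ) * y = b * y := by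
        rw [hθ, hba]; field_simp; ring
      have h2 := hΦconv.2 (Set.mem_Ioi.2 hu0) (Set.mem_Ioi.2 hy) hθ0 hθ1' hsum
      simp only [smul_eq_mul] at h2
      rw [harg] at h2
      exact h2
    have hT : Tendsto (fun u : ℝ => (a * y / (y - u)) * Φ u + (1 - a * y / (y - u)) * Φ y)
        (nhdsWithin 0 (Set.Ioi 0)) (nhds (a * Φ 0 + b * Φ y)) := by
      have hθT : Tendsto (fun u : ℝ => a * y / (y - u)) (nhdsWithin 0 (Set.Ioi 0)) (nhds a) := by
        have h1 : Tendsto (fun u : ℝ => a * y / (y - u)) (nhds 0) (nhds (a * y / (y - 0))) := by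
          apply Tendsto.div tendsto_const_nhds (tendsto_const_nhds.sub tendsto_id)
          simpa using hy.ne'
        have h2 : a * y / (y - 0) = a := by
          rw [sub_zero, mul_div_assoc, div_self hy.ne', mul_one]
        rw [h2] at h1
        exact h1.mono_left nhdsWithin_le_nhds
      have hb' : b = 1 - a := by linarith
      rw [hb']
      exact (hθT.mul hΦ0).add ((tendsto_const_nhds.sub hθT).mul tendsto_const_nhds)
    exact ge_of_tendsto hT hev
  refine ⟨convex_Ici 0, fun x hx y hy a b ha hb hab => ?_⟩
  rcases eq_or_lt_of_le (Set.mem_Ici.1 hx) with hx0 | hx0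
  · rcases eq_or_lt_of_le (Set.mem_Ici.1 hy) with hy0 | hy0
    · simp only [← hx0, ← hy0, smul_eq_mul, mul_zero, add_zero]
      have : a * Φ 0 + b * Φ 0 = Φ 0 := by rw [← add_mul, hab, one_mul]
      linarith
    · simpa only [← hx0, smul_eq_mul, mul_zero, zero_add] using key y hy0 a b ha hb hab
  · rcases eq_or_lt_of_le (Set.mem_Ici.1 hy) with hy0 | hy0
    · have := key x hx0 b a hb ha (by linarith)
      simp only [← hy0, smul_eq_mul, mul_zero, add_zero]
      linarith
    · exact hΦconv.2 (Set.mem_Ioi.2 hx0) (Set.mem_Ioi.2 hy0) ha hb hab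

lemma BFaux.lower_bound {Φ : ℝ → ℝ} (h : ConvexOn ℝ (Set.Ici 0) Φ) :
    ∃ K : ℝ, 0 ≤ K ∧ ∀ t : ℝ, 0 ≤ t → -(K * (t + 1)) ≤ Φ t := by
  refine ⟨3 * |Φ 1| + |Φ 2| + 2 * |Φ (1/2)| + 1, by positivity, fun t ht => ?_⟩
  rcases le_or_gt t 1 with h1 | h1
  · have h2t : 0 < 2 - t := by linarith
    have h2t' : (2:ℝ) - t ≠ 0 := h2t.ne'
    have hc := h.2 (Set.mem_Ici.2 ht) (show (2:ℝ) ∈ Set.Ici 0 by norm_num)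
      (show 0 ≤ 1/(2-t) by positivity)
      (show 0 ≤ (1-t)/(2-t) from div_nonneg (by linarith) (by linarith))
      (by rw [← add_div, div_eq_one_iff_eq h2t']; ring)
    simp only [smul_eq_mul] at hc
    have harg : 1/(2-t) * t + (1-t)/(2-t) * 2 = 1 := by
      rw [div_mul_eq_mul_div, div_mul_eq_mul_div, ← add_div,
        div_eq_one_iff_eq h2t']; ring
    rw [harg] at hc
    have h' : (2 - t) * Φ 1 ≤ Φ t + (1 - t) * Φ 2 := by
      have h3 := mul_le_mul_of_nonneg_left hc h2t.le
      calc (2 - t) * Φ 1 ≤ (2 - t) * (1/(2-t) * Φ t + (1-t)/(2-t) * Φ 2) := h3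
        _ = Φ t + (1 - t) * Φ 2 := by field_simp
    have e1 : -((2-t) * |Φ 1|) ≤ (2-t) * Φ 1 := by
      rw [← mul_neg]
      exact mul_le_mul_of_nonneg_left (neg_abs_le _) h2t.le
    have e2 : (1-t) * Φ 2 ≤ (1-t) * |Φ 2| :=
      mul_le_mul_of_nonneg_left (le_abs_self _) (by linarith)
    have e3 : 0 ≤ t * |Φ 1| := mul_nonneg ht (abs_nonneg _)
    have e4 : 0 ≤ t * |Φ 2| := mul_nonneg ht (abs_nonneg _)
    have e5 : 0 ≤ t * |Φ (1/2)| := mul_nonneg ht (abs_nonneg _)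
    have e6 : 0 ≤ |Φ (1/2)| := abs_nonneg _
    nlinarith [abs_nonneg (Φ 1), abs_nonneg (Φ 2)]
  · have hth : 0 < t - 1/2 := by linarith
    have hth' : t - 1/2 ≠ 0 := hth.ne'
    have hc := h.2 (show (1/2:ℝ) ∈ Set.Ici 0 by norm_num) (Set.mem_Ici.2 ht)
      (show 0 ≤ (t-1)/(t-1/2) from div_nonneg (by linarith) (by linarith))
      (show 0 ≤ (1/2)/(t-1/2) by positivity)
      (by rw [← add_div, div_eq_one_iff_eq hth']; ring)
    simp only [smul_eq_mul] at hc
    have harg : (t-1)/(t-1/2) * (1/2) + (1/2)/(t-1/2) * t = 1 := by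
      rw [div_mul_eq_mul_div, div_mul_eq_mul_div, ← add_div,
        div_eq_one_iff_eq hth']; ring
    rw [harg] at hc
    have h' : (t - 1/2) * Φ 1 ≤ (t - 1) * Φ (1/2) + (1/2) * Φ t := by
      have h3 := mul_le_mul_of_nonneg_left hc hth.le
      calc (t - 1/2) * Φ 1
          ≤ (t - 1/2) * ((t-1)/(t-1/2) * Φ (1/2) + (1/2)/(t-1/2) * Φ t) := h3
        _ = (t - 1) * Φ (1/2) + (1/2) * Φ t := by
          rw [mul_add,
            show (t-1/2) * ((t-1)/(t-1/2) * Φ (1/2)) = (t-1) * Φ (1/2) by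
              rw [← mul_assoc, mul_comm (t-1/2), div_mul_cancel₀ _ hth'],
            show (t-1/2) * ((1/2)/(t-1/2) * Φ t) = (1/2) * Φ t by
              rw [← mul_assoc, mul_comm (t-1/2), div_mul_cancel₀ _ hth']]
    have e1 : -((t-1/2) * |Φ 1|) ≤ (t-1/2) * Φ 1 := by
      rw [← mul_neg]
      exact mul_le_mul_of_nonneg_left (neg_abs_le _) hth.le
    have e2 : (t-1) * Φ (1/2) ≤ (t-1) * |Φ (1/2)| :=
      mul_le_mul_of_nonneg_left (le_abs_self _) (by linarith)
    have e3 : 0 ≤ (t+1) * |Φ 2| := mul_nonneg (by linarith) (abs_nonneg _)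
    have e4 : 0 ≤ (t+1) * |Φ 1| := mul_nonneg (by linarith) (abs_nonneg _)
    have e5 : 0 ≤ (t+1) * |Φ (1/2)| := mul_nonneg (by linarith) (abs_nonneg _)
    nlinarith [abs_nonneg (Φ 1), abs_nonneg (Φ (1/2))]



lemma BFaux.continuous_ext {Φ : ℝ → ℝ}
    (hΦconv : ConvexOn ℝ (Set.Ioi 0) Φ)
    (hΦ0 : Tendsto Φ (nhdsWithin 0 (Set.Ioi 0)) (nhds (Φ 0))) :
    Continuous (fun t : ℝ => if 0 < t then Φ t else Φ 0) := by
  have hcont : ContinuousOn Φ (Set.Ioi 0) := hΦconv.continuousOn isOpen_Ioi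
  rw [continuous_iff_continuousAt]
  intro t
  rcases lt_trichotomy t 0 with ht | ht | ht
  · apply continuousAt_const.congr
    filter_upwards [Iio_mem_nhds ht] with u hu
    exact (if_neg (not_lt.2 (Set.mem_Iio.1 hu).le)).symm
  · subst ht
    have hT : Tendsto (fun t : ℝ => if 0 < t then Φ t else Φ 0) (nhds 0) (nhds (Φ 0)) := by
      rw [← nhdsLE_sup_nhdsGT (0:ℝ), tendsto_sup]
      constructor
      · refine Tendsto.congr' ?_ tendsto_const_nhds
        filter_upwards [eventually_mem_nhdsWithin] with u hu
        exact (if_neg (not_lt.2 (Set.mem_Iic.1 hu))).symm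
      · refine Tendsto.congr' ?_ hΦ0
        filter_upwards [eventually_mem_nhdsWithin] with u hu
        exact (if_pos (Set.mem_Ioi.1 hu)).symm
    rw [ContinuousAt, if_neg (lt_irrefl (0:ℝ))]
    exact hT
  · apply (hcont.continuousAt (Ioi_mem_nhds ht)).congr
    filter_upwards [Ioi_mem_nhds ht] with u hu
    exact (if_pos (Set.mem_Ioi.1 hu)).symm


lemma BFaux.densAE_coeFn (P Q : Measure Ω) :
    (densAE P Q : Ω →ₘ[P] ℝ) =ᵐ[P] fun ω => (Q.rnDeriv P ω).toReal :=
  AEEqFun.coeFn_mk _ _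

/-- Theorem 17(b) of Biagini–Frittelli: if `Φ(0) < +∞` and `M_Φ` contains a measure
equivalent to `P`, then the polar of `C_Φ` inside the linear span `Lin(M_Φ)` of the
densities of `M_Φ` is exactly the convex cone `co(M_Φ)` generated by `M_Φ`; hence `C_Φ`
and `co(M_Φ)` are polar to one another. -/
theorem polar_of_CPhi_eq_cone_of_MPhi
    (P : Measure Ω) [IsProbabilityMeasure P]
    (C : Set (Ω → ℝ))
    (hCbdd : ∀ g ∈ C, MemLp g ⊤ P)
    (hCcone : ∀ f ∈ C, ∀ g ∈ C, ∀ a b : ℝ, 0 ≤ a → 0 ≤ b →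
      (fun ω => a * f ω + b * g ω) ∈ C)
    (hCneg : ∀ f : Ω → ℝ, MemLp f ⊤ P → (∀ᵐ ω ∂P, f ω ≤ 0) → f ∈ C)
    (Φ : ℝ → ℝ)
    (hΦconv : ConvexOn ℝ (Set.Ioi 0) Φ)
    (hΦgrowth : ∀ l₀ l₁ : ℝ, 0 < l₀ → l₀ ≤ l₁ → ∃ a : ℝ, 0 < a ∧ ∃ b : ℝ, 0 < b ∧
      ∀ y : ℝ, 0 < y → ∀ l ∈ Set.Icc l₀ l₁,
        max (Φ (l * y)) 0 ≤ a * max (Φ y) 0 + b * (y + 1))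
    (hΦ0 : Tendsto Φ (nhdsWithin 0 (Set.Ioi 0)) (nhds (Φ 0)))
    (hMPhiP : ∃ Q ∈ MPhi P C Φ, P ≪ Q) :
    {z : Ω →ₘ[P] ℝ | z ∈ Submodule.span ℝ (densAE P '' MPhi P C Φ) ∧
        ∀ f ∈ CPhi P C Φ, ∫ ω, z ω * f ω ∂P ≤ 0} =
      {z : Ω →ₘ[P] ℝ | ∃ l : ℝ, 0 ≤ l ∧ ∃ Q ∈ MPhi P C Φ, z = l • densAE P Q} := by
  classical
  have hΦIci : ConvexOn ℝ (Set.Ici 0) Φ := BFaux.convexOn_Ici hΦconv hΦ0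
  obtain ⟨K, hK0, hKb⟩ := BFaux.lower_bound hΦIci
  -- elements of C are integrable w.r.t. any prob measure ≪ P
  have hCint : ∀ g ∈ C, ∀ Q : Measure Ω, IsProbabilityMeasure Q → Q ≪ P → Integrable g Q := by
    intro g hg Q hQprob hQP
    haveI := hQprob
    obtain ⟨hgm, hgb⟩ := hCbdd g hg
    rw [eLpNorm_exponent_top] at hgb
    refine (memLp_top_of_bound (hgm.mono_ac hQP) (eLpNormEssSup g P).toReal ?_).integrable le_top
    have h1 : ∀ᵐ ω ∂P, ‖g ω‖ ≤ (eLpNormEssSup g P).toReal := by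
      filter_upwards [ae_le_eLpNormEssSup (f := g) (μ := P)] with ω hω
      have := ENNReal.toReal_mono hgb.ne hω
      simpa using this
    exact h1.filter_mono hQP.ae_le
  -- C ⊆ CPhi
  have hCsub : ∀ g ∈ C, g ∈ CPhi P C Φ := by
    intro g hg Q hQ
    obtain ⟨⟨hQprob, hQP, hQsep⟩, hQint⟩ := hQ
    haveI := hQprob
    refine ⟨hCint g hg Q hQprob hQP, fun ε hε => ⟨g, hg, ?_⟩⟩
    simpa using hε
  -- elements of CPhi have nonpositive expectation under every Q ∈ MPhi
  have hCPhi_nonpos : ∀ f ∈ CPhi P C Φ, ∀ Q ∈ MPhi P C Φ, ∫ ω, f ω ∂Q ≤ 0 := by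
    intro f hf Q hQ
    obtain ⟨hfi, happ⟩ := hf Q hQ
    obtain ⟨⟨hQprob, hQP, hQsep⟩, _⟩ := hQ
    haveI := hQprob
    have : ∀ ε : ℝ, 0 < ε → ∫ ω, f ω ∂Q ≤ 0 + ε := by
      intro ε hε
      obtain ⟨g, hg, hgε⟩ := happ ε hε
      have hgi : Integrable g Q := hCint g hg Q hQprob hQP
      have h2 : ∫ ω, (f ω - g ω) ∂Q ≤ ∫ ω, |f ω - g ω| ∂Q :=
        integral_mono (hfi.sub hgi) (hfi.sub hgi).abs fun ω => le_abs_self _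
      rw [integral_sub hfi hgi] at h2
      have h3 := hQsep g hg
      linarith
    have := le_of_forall_pos_le_add fun ε hε => this ε hε
    simpa using this
  ext z
  simp only [Set.mem_setOf_eq]
  constructor
  · rintro ⟨hspan, hpolar⟩
    obtain ⟨n, c, gs, hsum⟩ := Submodule.mem_span_set'.1 hspan
    choose Qm hQmem hQeq using fun i : Fin n => (gs i).2
    have hprob : ∀ i, IsProbabilityMeasure (Qm i) := fun i => (hQmem i).1.1
    set D : Fin n → Ω → ℝ := fun i ω => ((Qm i).rnDeriv P ω).toReal with hD
    have hDm : ∀ i, Measurable (D i) := fun i => (Measure.measurable_rnDeriv _ _).ennreal_toReal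
    have hDnn : ∀ i ω, 0 ≤ D i ω := fun i ω => ENNReal.toReal_nonneg
    have hDint : ∀ i, Integrable (D i) P := fun i =>
      haveI := hprob i; Measure.integrable_toReal_rnDeriv
    -- a.e. representation of z as a finite combination of densities
    have hzae : ⇑z =ᵐ[P] fun ω => ∑ i, c i * D i ω := by
      have h1 : ∀ s : Finset (Fin n),
          ⇑(∑ i ∈ s, c i • (gs i : Ω →ₘ[P] ℝ)) =ᵐ[P] fun ω => ∑ i ∈ s, c i * D i ω := by
        intro s
        induction s using Finset.induction_on with
        | empty => simp only [Finset.sum_empty]; exact AEEqFun.coeFn_zero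
        | insert _ _ hnotmem ih =>
          rename_i j s'
          rw [Finset.sum_insert hnotmem]
          have hgj : ⇑(gs j : Ω →ₘ[P] ℝ) =ᵐ[P] D j := by
            rw [← hQeq j]; exact BFaux.densAE_coeFn P (Qm j)
          filter_upwards [AEEqFun.coeFn_add (c j • (gs j : Ω →ₘ[P] ℝ))
            (∑ i ∈ s', c i • (gs i : Ω →ₘ[P] ℝ)),
            AEEqFun.coeFn_smul (c j) (gs j : Ω →ₘ[P] ℝ), hgj, ih] with ω e1 e2 e3 e4
          rw [e1, Finset.sum_insert hnotmem]
          simp only [Pi.add_apply]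
          rw [e4, e2]
          simp only [Pi.smul_apply, smul_eq_mul, e3]
      have := h1 Finset.univ
      rw [hsum] at this
      exact this
    have hzint : Integrable (⇑z) P :=
      (integrable_finset_sum Finset.univ fun i _ => (hDint i).const_mul (c i)).congr hzae.symm
    -- nonnegativity of z
    set A : Set Ω := {ω | z ω < 0} with hAdef
    have hAm : MeasurableSet A := measurableSet_lt z.measurable measurable_const
    have hf₀C : (fun ω => - A.indicator (fun _ => (1:ℝ)) ω) ∈ C := by
      apply hCneg
      · apply memLp_top_of_bound ((measurable_one.indicator hAm).aestronglyMeasurable.neg) 1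
        refine Eventually.of_forall fun ω => ?_
        by_cases hω : ω ∈ A <;>
          simp [Set.indicator_of_mem, Set.indicator_of_notMem, hω]
      · refine Eventually.of_forall fun ω => ?_
        by_cases hω : ω ∈ A <;> simp [hω]
    have h₁ := hpolar _ (hCsub _ hf₀C)
    have h₂ : (fun ω => z ω * (- A.indicator (fun _ => (1:ℝ)) ω))
        = fun ω => - A.indicator (fun ω => z ω) ω := by
      funext ω
      by_cases hω : ω ∈ A <;> simp [hω]
    rw [h₂, integral_neg, integral_indicator hAm, neg_nonpos] at h₁
    have h₃ : ∫ ω in A, z ω ∂P ≤ 0 := by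
      have hnn : 0 ≤ᵐ[P.restrict A] fun ω => - z ω := by
        rw [EventuallyLE, ae_restrict_iff' hAm]
        exact Eventually.of_forall fun ω hω => by
          simp only [Pi.zero_apply]
          have : z ω < 0 := hω
          linarith
      have := setIntegral_nonneg_of_ae_restrict hnn
      rw [integral_neg] at this
      linarith
    have h₄ : ∫ ω in A, z ω ∂P = 0 := le_antisymm h₃ h₁
    have hPA : P A = 0 := by
      have hnn : 0 ≤ᵐ[P.restrict A] fun ω => - z ω := by
        rw [EventuallyLE, ae_restrict_iff' hAm]
        exact Eventually.of_forall fun ω hω => by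
          simp only [Pi.zero_apply]
          have : z ω < 0 := hω
          linarith
      have hint : Integrable (fun ω => - z ω) (P.restrict A) := (hzint.restrict).neg
      have h₅ : (fun ω => - z ω) =ᵐ[P.restrict A] 0 :=
        (integral_eq_zero_iff_of_nonneg_ae hnn hint).1 (by rw [integral_neg, h₄, neg_zero])
      have h₆ : ∀ᵐ ω ∂P, ω ∈ A → - z ω = 0 := (ae_restrict_iff' hAm).1 h₅
      have h₇ : ∀ᵐ ω ∂P, ω ∉ A := by
        filter_upwards [h₆] with ω h hωA
        have h8 := h hωA
        have h9 : z ω < 0 := hωA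
        simp only [neg_eq_zero] at h8
        linarith
      have h8 := ae_iff.1 h₇
      simpa using h8
    have hznn : 0 ≤ᵐ[P] ⇑z := by
      have h7 : ∀ᵐ ω ∂P, ω ∉ A := by
        rw [ae_iff]; simpa using hPA
      filter_upwards [h7] with ω hω
      exact not_lt.1 hω
    set l : ℝ := ∫ ω, z ω ∂P with hldef
    have hl0 : 0 ≤ l := integral_nonneg_of_ae hznn
    rcases eq_or_lt_of_le hl0 with hl | hl
    · -- l = 0 : z = 0
      obtain ⟨Q₀, hQ₀, _⟩ := hMPhiP
      have hz0 : ⇑z =ᵐ[P] 0 :=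
        (integral_eq_zero_iff_of_nonneg_ae hznn hzint).1 hl.symm
      refine ⟨0, le_refl 0, Q₀, hQ₀, ?_⟩
      rw [zero_smul]
      exact AEEqFun.ext (hz0.trans (AEEqFun.coeFn_zero (μ := P)).symm)
    · -- l > 0 : normalize
      set ρ : Ω → ℝ := fun ω => l⁻¹ * z ω with hρdef
      have hρm : Measurable ρ := z.measurable.const_mul l⁻¹
      have hρnn : 0 ≤ᵐ[P] ρ := by
        filter_upwards [hznn] with ω h
        exact mul_nonneg (inv_nonneg.2 hl0) h
      have hρint : Integrable ρ P := hzint.const_mul _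
      have hρ1 : ∫ ω, ρ ω ∂P = 1 := by
        rw [hρdef]
        rw [integral_const_mul]
        exact inv_mul_cancel₀ hl.ne'
      -- positive-part coefficients
      set cp : Fin n → ℝ := fun i => max (c i) 0 with hcp
      have hcpnn : ∀ i, 0 ≤ cp i := fun i => le_max_right _ _
      set s : ℝ := ∑ i, cp i with hsdef
      have hs0 : 0 ≤ s := Finset.sum_nonneg fun i _ => hcpnn i
      have hs : 0 < s := by
        rcases eq_or_lt_of_le hs0 with h | h
        · exfalso
          have hcp0 : ∀ i, cp i = 0 := by
            intro i
            have := (Finset.sum_eq_zero_iff_of_nonneg fun i _ => hcpnn i).1 h.symm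
            exact this i (Finset.mem_univ i)
          have hcneg : ∀ i, c i ≤ 0 := fun i => by
            have := hcp0 i
            rw [hcp, max_eq_right_iff] at this
            · exact (le_max_left _ _).trans_eq (hcp0 i)
          have hzle : ∀ᵐ ω ∂P, z ω ≤ 0 := by
            filter_upwards [hzae] with ω hω
            rw [hω]
            exact Finset.sum_nonpos fun i _ =>
              mul_nonpos_iff.2 (Or.inr ⟨hcneg i, hDnn i ω⟩)
          have hz0 : ⇑z =ᵐ[P] 0 := by
            filter_upwards [hznn, hzle] with ω h1 h2
            exact le_antisymm h2 h1
          have : l = 0 := by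
            rw [hldef]
            rw [integral_congr_ae hz0]
            simp
          linarith
        · exact h
      set y : Ω → ℝ := fun ω => ∑ i, (cp i / s) * D i ω with hydef
      have hynn : ∀ ω, 0 ≤ y ω := fun ω =>
        Finset.sum_nonneg fun i _ => mul_nonneg (div_nonneg (hcpnn i) hs0) (hDnn i ω)
      have hyint : Integrable y P :=
        integrable_finset_sum Finset.univ fun i _ => (hDint i).const_mul _
      have hzley : ∀ᵐ ω ∂P, z ω ≤ s * y ω := by
        filter_upwards [hzae] with ω hω
        rw [hω, hydef]
        have : s * ∑ i, (cp i / s) * D i ω = ∑ i, cp i * D i ω := by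
          rw [Finset.mul_sum]
          congr 1
          funext i
          rw [← mul_assoc, mul_div_cancel₀ _ hs.ne']
        rw [this]
        exact Finset.sum_le_sum fun i _ =>
          mul_le_mul_of_nonneg_right (le_max_left _ _) (hDnn i ω)
      have hJ : ∀ ω, Φ (y ω) ≤ ∑ i, (cp i / s) * Φ (D i ω) := by
        intro ω
        have := hΦIci.map_sum_le (t := Finset.univ) (w := fun i => cp i / s)
          (p := fun i => D i ω)
          (fun i _ => div_nonneg (hcpnn i) hs0)
          (by rw [← Finset.sum_div, ← hsdef, div_self hs.ne'])
          (fun i _ => Set.mem_Ici.2 (hDnn i ω))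
        simpa [smul_eq_mul] using this
      set S : ℝ := l⁻¹ * s with hSdef
      have hS : 0 < S := mul_pos (inv_pos.2 hl) hs
      obtain ⟨a, ha, b, hb, hG⟩ := hΦgrowth S S hS le_rfl
      -- the integrable bound
      set G : Ω → ℝ := fun ω => max (Φ 0) 0 +
        (a * max (∑ i, (cp i / s) * Φ (D i ω)) 0 + b * (y ω + 1)) + K * (ρ ω + 1) with hGdef
      have hsumΦint : Integrable (fun ω => ∑ i, (cp i / s) * Φ (D i ω)) P :=
        integrable_finset_sum Finset.univ fun i _ => ((hQmem i).2).const_mul _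
      have hGint : Integrable G P := by
        refine (((integrable_const _).add ?_).add ?_)
        · exact ((hsumΦint.pos_part).const_mul a).add
            ((hyint.add (integrable_const 1)).const_mul b)
        · exact ((hρint.add (integrable_const 1)).const_mul K)
      -- a.e. bound on |Φ ∘ ρ|
      have hbound : ∀ᵐ ω ∂P, ‖Φ (ρ ω)‖ ≤ G ω := by
        filter_upwards [hznn, hzley] with ω hz0 hzsy
        have ht0 : 0 ≤ ρ ω := mul_nonneg (inv_nonneg.2 hl0) hz0
        have hts : ρ ω ≤ S * y ω := by
          have := mul_le_mul_of_nonneg_left hzsy (inv_nonneg.2 hl0)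
          calc ρ ω = l⁻¹ * z ω := rfl
            _ ≤ l⁻¹ * (s * y ω) := this
            _ = S * y ω := by rw [hSdef]; ring
        have hy0 : 0 ≤ y ω := hynn ω
        have hSy0 : 0 ≤ S * y ω := mul_nonneg hS.le hy0
        -- upper bound
        have hup : Φ (ρ ω) ≤ max (Φ 0) (Φ (S * y ω)) := by
          apply hΦIci.le_on_segment (Set.mem_Ici.2 le_rfl) (Set.mem_Ici.2 hSy0)
          rw [segment_eq_Icc hSy0]
          exact ⟨ht0, hts⟩
        have hMnn : 0 ≤ a * max (∑ i, (cp i / s) * Φ (D i ω)) 0 :=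
          mul_nonneg ha.le (le_max_right _ _)
        have hup2 : max (Φ 0) (Φ (S * y ω)) ≤ max (Φ 0) 0 +
            (a * max (∑ i, (cp i / s) * Φ (D i ω)) 0 + b * (y ω + 1)) := by
          rcases eq_or_lt_of_le hy0 with hy | hy
          · rw [← hy, mul_zero]
            have : max (Φ 0) (Φ 0) = Φ 0 := max_self _
            rw [this]
            have h1 : Φ 0 ≤ max (Φ 0) 0 := le_max_left _ _
            nlinarith
          · have hGy := hG (y ω) hy S ⟨le_rfl, le_rfl⟩
            have h1 : Φ (S * y ω) ≤ max (Φ (S * y ω)) 0 := le_max_left _ _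
            have h2 : max (Φ (y ω)) 0 ≤ max (∑ i, (cp i / s) * Φ (D i ω)) 0 :=
              max_le_max (hJ ω) le_rfl
            have h3 : Φ (S * y ω) ≤ a * max (∑ i, (cp i / s) * Φ (D i ω)) 0 + b * (y ω + 1) := by
              have := mul_le_mul_of_nonneg_left h2 ha.le
              linarith
            apply max_le
            · have h4 : Φ 0 ≤ max (Φ 0) 0 := le_max_left _ _
              have h5 : 0 ≤ b * (y ω + 1) := mul_nonneg hb.le (by linarith)
              linarith
            · have h4 : 0 ≤ max (Φ 0) 0 := le_max_right _ _
              linarith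
        have hlow : -(K * (ρ ω + 1)) ≤ Φ (ρ ω) := hKb _ ht0
        rw [Real.norm_eq_abs, abs_le]
        constructor
        · have h5 : 0 ≤ max (Φ 0) 0 := le_max_right _ _
          have h6 : 0 ≤ b * (y ω + 1) := mul_nonneg hb.le (by linarith)
          rw [hGdef]
          simp only
          linarith
        · have h7 : 0 ≤ K * (ρ ω + 1) := mul_nonneg hK0 (by linarith)
          rw [hGdef]
          simp only
          linarith
      -- measurability of Φ ∘ ρ
      have hmeas : AEStronglyMeasurable (fun ω => Φ (ρ ω)) P := by
        have hΦE := BFaux.continuous_ext hΦconv hΦ0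
        have h1 : Measurable fun ω => if 0 < ρ ω then Φ (ρ ω) else Φ 0 :=
          hΦE.measurable.comp hρm
        refine h1.aestronglyMeasurable.congr ?_
        filter_upwards [hρnn] with ω hω
        simp only [Pi.zero_apply] at hω
        rcases eq_or_lt_of_le hω with h | h
        · rw [if_neg (by rw [← h]; exact lt_irrefl 0), ← h]
        · rw [if_pos h]
      have hΦρint : Integrable (fun ω => Φ (ρ ω)) P :=
        Integrable.mono' hGint hmeas hbound
      -- the normalized measure
      set ν : Measure Ω := P.withDensity (fun ω => ENNReal.ofReal (ρ ω)) with hνdef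
      have hνprob : IsProbabilityMeasure ν := by
        constructor
        rw [hνdef, withDensity_apply _ MeasurableSet.univ, setLIntegral_univ,
          ← ofReal_integral_eq_lintegral_ofReal hρint hρnn, hρ1, ENNReal.ofReal_one]
      have hνP : ν ≪ P := withDensity_absolutelyContinuous P _
      have hνrn : ν.rnDeriv P =ᵐ[P] fun ω => ENNReal.ofReal (ρ ω) :=
        Measure.rnDeriv_withDensity P hρm.ennreal_ofReal
      have hνD : (fun ω => (ν.rnDeriv P ω).toReal) =ᵐ[P] ρ := by
        filter_upwards [hνrn, hρnn] with ω e1 e2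
        rw [e1, ENNReal.toReal_ofReal e2]
      -- integrals against ν
      have hwd : ∀ g : Ω → ℝ, ∫ ω, g ω ∂ν = ∫ ω, max (ρ ω) 0 * g ω ∂P := by
        intro g
        have h1 : ν = P.withDensity (fun ω => ((ρ ω).toNNReal : ℝ≥0∞)) := rfl
        rw [h1, integral_withDensity_eq_integral_smul₀ hρm.real_toNNReal.aemeasurable g]
        apply integral_congr_ae
        refine Eventually.of_forall fun ω => ?_
        show (ρ ω).toNNReal • g ω = max (ρ ω) 0 * g ω
        rw [NNReal.smul_def, Real.coe_toNNReal', smul_eq_mul]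
      have hsep : ∀ g ∈ C, ∫ ω, g ω ∂ν ≤ 0 := by
        intro g hg
        rw [hwd g]
        have h1 : ∫ ω, max (ρ ω) 0 * g ω ∂P = ∫ ω, l⁻¹ * (z ω * g ω) ∂P := by
          apply integral_congr_ae
          filter_upwards [hρnn] with ω hω
          simp only [Pi.zero_apply] at hω
          rw [max_eq_left hω]
          show l⁻¹ * z ω * g ω = l⁻¹ * (z ω * g ω)
          ring
        rw [h1, integral_const_mul]
        have h2 := hpolar g (hCsub g hg)
        have h3 : 0 ≤ l⁻¹ := inv_nonneg.2 hl0
        exact mul_nonpos_iff.2 (Or.inl ⟨h3, h2⟩)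
      have hνint : Integrable (fun ω => Φ ((ν.rnDeriv P ω).toReal)) P := by
        apply hΦρint.congr
        filter_upwards [hνD] with ω h
        rw [h]
      refine ⟨l, hl0, ν, ⟨⟨hνprob, hνP, hsep⟩, hνint⟩, ?_⟩
      apply AEEqFun.ext
      filter_upwards [AEEqFun.coeFn_smul l (densAE P ν), BFaux.densAE_coeFn P ν, hνD]
        with ω e1 e2 e3
      rw [e1, Pi.smul_apply, smul_eq_mul, e2, e3, hρdef]
      rw [← mul_assoc, mul_inv_cancel₀ hl.ne', one_mul]
  · rintro ⟨l, hl, Q, hQ, rfl⟩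
    obtain ⟨⟨hQprob, hQP, hQsep⟩, hQint⟩ := hQ
    haveI := hQprob
    refine ⟨Submodule.smul_mem _ _ (Submodule.subset_span
      ⟨Q, ⟨⟨hQprob, hQP, hQsep⟩, hQint⟩, rfl⟩), ?_⟩
    intro f hf
    have hfae : ⇑(l • densAE P Q) =ᵐ[P] fun ω => l * (Q.rnDeriv P ω).toReal := by
      filter_upwards [AEEqFun.coeFn_smul l (densAE P Q), BFaux.densAE_coeFn P Q] with ω e1 e2
      rw [e1, Pi.smul_apply, smul_eq_mul, e2]
    have hprod : (fun ω => (l • densAE P Q) ω * f ω)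
        =ᵐ[P] fun ω => l * ((Q.rnDeriv P ω).toReal * f ω) := by
      filter_upwards [hfae] with ω h
      rw [h]; ring
    rw [integral_congr_ae hprod, integral_const_mul]
    have h1 : ∫ ω, (Q.rnDeriv P ω).toReal * f ω ∂P = ∫ ω, f ω ∂Q := by
      have := integral_rnDeriv_smul (μ := Q) (ν := P) hQP (f := f)
      simpa [smul_eq_mul] using this
    rw [h1]
    exact mul_nonpos_iff.2 (Or.inl ⟨hl,
      hCPhi_nonpos f hf Q ⟨⟨hQprob, hQP, hQsep⟩, hQint⟩⟩)
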